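/- Let δ ≥ 2, a ≥ 1, t' ≥ 1, and let β_{i,j} (i ∈ [t'], j ∈ [a]) and γ_1,…,γ_{δ-1} be distinct elements of F_q. Form the t'(a+δ-1) × t'(a+δ-1) matrix M with block-diagonal blocks P_i = V_{δ-1}(β_{i,1},…,β_{i,a},γ_1,…,γ_{δ-1}) for i ∈ [t'], and bottom block row (Q_1|…|Q_{t'}) where Q_i consists of rows δ-1 through at'+δ-2 of the Vandermonde matrix on the same locators (β_{i,·}, γ_·). Then M is invertible; in fact det(M) = ±(det V_{δ-1}(γ_1,…,γ_{δ-1}))^{t'-1} · det V_{at'+δ-1}(β_{1,1},…,β_{t',a},γ_1,…,γ_{δ-1}) up to sign, and both factors are nonzero. -/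

import Mathlib

namespace Stmt13Aux
set_option linter.unusedSectionVars false

open Matrix

variable {F : Type*} [Field F] [DecidableEq F]

theorem det_pow_ne_zero {n : ℕ} {v : Fin n → F} (hv : Function.Injective v) :
    (Matrix.of fun i j : Fin n => v j ^ (i : ℕ)).det ≠ 0 := by
  have h : (Matrix.of fun i j : Fin n => v j ^ (i : ℕ)) = (Matrix.vandermonde v)ᵀ := by
    ext i j
    simp [Matrix.vandermonde]
  rw [h, Matrix.det_transpose, Matrix.det_vandermonde]
  refine Finset.prod_ne_zero_iff.mpr fun i _ => Finset.prod_ne_zero_iff.mpr fun j hj => ?_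
  rw [Finset.mem_Ioi] at hj
  exact sub_ne_zero.mpr fun h' => absurd (hv h') (by exact fun hh => by simp [hh] at hj)

theorem det_submatrix_sign {n m : Type*} [DecidableEq n] [Fintype n] [DecidableEq m] [Fintype m]
    (M : Matrix m m F) (e f : n ≃ m) :
    ∃ ε : F, (ε = 1 ∨ ε = -1) ∧ (M.submatrix e f).det = ε * M.det := by
  have h : M.submatrix ⇑e ⇑f = (M.submatrix f f).submatrix ⇑(e.trans f.symm) id := by
    ext i j; simp
  refine ⟨((Equiv.Perm.sign (e.trans f.symm) : ℤ) : F), ?_, ?_⟩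
  · rcases Int.units_eq_one_or (Equiv.Perm.sign (e.trans f.symm)) with h1 | h1 <;>
      rw [h1] <;> norm_num
  · rw [h, Matrix.det_permute, Matrix.det_submatrix_equiv_self]

section Main

variable {a t' δ : ℕ}

/-- locator values -/
def locf (β : Fin t' → Fin a → F) (γ : Fin (δ - 1) → F) :
    Fin t' × (Fin a ⊕ Fin (δ - 1)) → F := fun c => Sum.elim (fun j => β c.1 j) γ c.2

/-- the written-symbols matrix -/
def Hmat (β : Fin t' → Fin a → F) (γ : Fin (δ - 1) → F) :
    Matrix ((Fin t' × Fin (δ - 1)) ⊕ Fin (a * t')) (Fin t' × (Fin a ⊕ Fin (δ - 1))) F :=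
  fun ri ci =>
    Sum.elim
      (fun p => if p.1 = ci.1 then locf β γ ci ^ (p.2 : ℕ) else 0)
      (fun w => locf β γ ci ^ (δ - 1 + (w : ℕ)))
      ri

/-- column-operation matrix -/
def Cmat (i₀ : Fin t') :
    Matrix (Fin t' × (Fin a ⊕ Fin (δ - 1))) (Fin t' × (Fin a ⊕ Fin (δ - 1))) F :=
  1 + Matrix.of (fun z c => if z = (i₀, c.2) ∧ c.1 ≠ i₀ ∧ c.2.isRight then (-1 : F) else 0)

/-- row-operation matrix -/
def Emat (i₀ : Fin t') :
    Matrix ((Fin t' × Fin (δ - 1)) ⊕ Fin (a * t')) ((Fin t' × Fin (δ - 1)) ⊕ Fin (a * t')) F :=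
  1 + Matrix.of (Sum.elim
      (fun p => Sum.elim
        (fun q => if p.1 = i₀ ∧ q.1 ≠ i₀ ∧ p.2 = q.2 then (1 : F) else 0)
        (fun _ => 0))
      (fun _ _ => 0))

def HCmat (β : Fin t' → Fin a → F) (γ : Fin (δ - 1) → F) (i₀ : Fin t') :
    Matrix ((Fin t' × Fin (δ - 1)) ⊕ Fin (a * t')) (Fin t' × (Fin a ⊕ Fin (δ - 1))) F :=
  Hmat β γ * Cmat i₀

def Nmat (β : Fin t' → Fin a → F) (γ : Fin (δ - 1) → F) (i₀ : Fin t') :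
    Matrix ((Fin t' × Fin (δ - 1)) ⊕ Fin (a * t')) (Fin t' × (Fin a ⊕ Fin (δ - 1))) F :=
  Emat i₀ * HCmat β γ i₀

def eAW (a t' : ℕ) : Fin t' × Fin a ≃ Fin (a * t') :=
  finProdFinEquiv.trans (finCongr (Nat.mul_comm t' a))

def κe (a δ : ℕ) (i₀ : Fin t') :
    (Fin t' × (Fin a ⊕ Fin (δ - 1))) ≃
      (({i : Fin t' // i ≠ i₀} × Fin (δ - 1)) ⊕ (Fin (δ - 1) ⊕ Fin (a * t'))) where
  toFun c := match c with
    | (i, .inl j) => .inr (.inr (eAW a t' (i, j)))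
    | (i, .inr ℓ) => if h : i = i₀ then .inr (.inl ℓ) else .inl (⟨i, h⟩, ℓ)
  invFun x := match x with
    | .inl (p, ℓ) => (p.1, .inr ℓ)
    | .inr (.inl ℓ) => (i₀, .inr ℓ)
    | .inr (.inr w) => (((eAW a t').symm w).1, .inl ((eAW a t').symm w).2)
  left_inv := by
    rintro ⟨i, j | ℓ⟩
    · simp
    · by_cases h : i = i₀
      · subst h; simp
      · simp [h]
  right_inv := by
    rintro (⟨p, ℓ⟩ | (ℓ | w))
    · simp [p.2]
    · simp
    · simp

def ρe (a δ : ℕ) (i₀ : Fin t') :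
    ((Fin t' × Fin (δ - 1)) ⊕ Fin (a * t')) ≃
      (({i : Fin t' // i ≠ i₀} × Fin (δ - 1)) ⊕ (Fin (δ - 1) ⊕ Fin (a * t'))) where
  toFun x := match x with
    | .inl (i, r) => if h : i = i₀ then .inr (.inl r) else .inl (⟨i, h⟩, r)
    | .inr w => .inr (.inr w)
  invFun x := match x with
    | .inl (p, r) => .inl (p.1, r)
    | .inr (.inl r) => .inl (i₀, r)
    | .inr (.inr w) => .inr w
  left_inv := by
    rintro (⟨i, r⟩ | w)
    · by_cases h : i = i₀
      · subst h; simp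
      · simp [h]
    · simp
  right_inv := by
    rintro (⟨p, r⟩ | (r | w))
    · simp [p.2]
    · simp
    · simp

variable (β : Fin t' → Fin a → F) (γ : Fin (δ - 1) → F) (i₀ : Fin t')

@[simp] lemma ρe_symm_inl (p : {i : Fin t' // i ≠ i₀}) (r : Fin (δ - 1)) :
    (ρe a δ i₀).symm (.inl (p, r)) = .inl (p.1, r) := rfl
@[simp] lemma ρe_symm_inr_inl (r : Fin (δ - 1)) :
    (ρe a δ i₀).symm (.inr (.inl r)) = .inl (i₀, r) := rfl
@[simp] lemma ρe_symm_inr_inr (w : Fin (a * t')) :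
    (ρe a δ i₀).symm (.inr (.inr w)) = .inr w := rfl
@[simp] lemma κe_symm_inl (p : {i : Fin t' // i ≠ i₀}) (ℓ : Fin (δ - 1)) :
    (κe a δ i₀).symm (.inl (p, ℓ)) = (p.1, .inr ℓ) := rfl
@[simp] lemma κe_symm_inr_inl (ℓ : Fin (δ - 1)) :
    (κe a δ i₀).symm (.inr (.inl ℓ)) = (i₀, .inr ℓ) := rfl
@[simp] lemma κe_symm_inr_inr (w : Fin (a * t')) :
    (κe a δ i₀).symm (.inr (.inr w)) =
      (((eAW a t').symm w).1, .inl ((eAW a t').symm w).2) := rfl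

@[simp] lemma Hmat_inl (p : Fin t' × Fin (δ - 1)) (c : Fin t' × (Fin a ⊕ Fin (δ - 1))) :
    Hmat β γ (.inl p) c = if p.1 = c.1 then locf β γ c ^ (p.2 : ℕ) else 0 := rfl
@[simp] lemma Hmat_inr (w : Fin (a * t')) (c : Fin t' × (Fin a ⊕ Fin (δ - 1))) :
    Hmat β γ (.inr w) c = locf β γ c ^ (δ - 1 + (w : ℕ)) := rfl

@[simp] lemma locf_inr (i : Fin t') (ℓ : Fin (δ - 1)) : locf β γ (i, .inr ℓ) = γ ℓ := rfl
@[simp] lemma locf_inl (i : Fin t') (j : Fin a) : locf β γ (i, .inl j) = β i j := rfl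


lemma mul_C_apply (y : (Fin t' × Fin (δ - 1)) ⊕ Fin (a * t'))
    (c : Fin t' × (Fin a ⊕ Fin (δ - 1))) :
    HCmat β γ i₀ y c = Hmat β γ y c +
      (if c.1 ≠ i₀ ∧ c.2.isRight then -(Hmat β γ y (i₀, c.2)) else 0) := by
  rw [HCmat]
  erw [Matrix.mul_apply]
  have key : ∀ z, Hmat β γ y z * Cmat (a := a) (δ := δ) (F := F) i₀ z c =
      (if z = c then Hmat β γ y z else 0) +
        (if c.1 ≠ i₀ ∧ c.2.isRight then
          (if z = (i₀, c.2) then -(Hmat β γ y z) else 0) else 0) := by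
    intro z
    simp only [Cmat, Matrix.add_apply, Matrix.one_apply, Matrix.of_apply]
    by_cases h1 : z = c <;> by_cases h2 : c.1 ≠ i₀ ∧ c.2.isRight <;>
      by_cases h3 : z = (i₀, c.2) <;>
      simp_all <;> ring_nf <;> simp_all
  rw [Finset.sum_congr rfl fun z _ => key z, Finset.sum_add_distrib]
  congr 1
  · simp
  · by_cases h2 : c.1 ≠ i₀ ∧ c.2.isRight <;> simp [h2]

lemma nb1 {i : Fin t'} (hi : i ≠ i₀) (r : Fin (δ - 1))
    (c : Fin t' × (Fin a ⊕ Fin (δ - 1))) :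
    Nmat β γ i₀ (.inl (i, r)) c = if i = c.1 then locf β γ c ^ (r : ℕ) else 0 := by
  rw [Nmat]
  erw [Matrix.mul_apply]
  have hE : ∀ y, Emat (a := a) (δ := δ) (F := F) i₀ (Sum.inl (i, r)) y =
      if (Sum.inl (i, r) : (Fin t' × Fin (δ - 1)) ⊕ Fin (a * t')) = y then 1 else 0 := by
    rintro (⟨i', r'⟩ | w) <;> simp [Emat, Matrix.one_apply, hi]
  simp only [hE, ite_mul, one_mul, zero_mul]
  rw [Finset.sum_ite_eq]
  simp only [Finset.mem_univ, if_true]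
  rw [mul_C_apply]
  simp [hi]


lemma nb2 (w : Fin (a * t')) (c : Fin t' × (Fin a ⊕ Fin (δ - 1))) :
    Nmat β γ i₀ (.inr w) c =
      if c.1 ≠ i₀ ∧ c.2.isRight then 0 else locf β γ c ^ (δ - 1 + (w : ℕ)) := by
  rw [Nmat]
  erw [Matrix.mul_apply]
  have hE : ∀ y, Emat (a := a) (δ := δ) (F := F) i₀ (Sum.inr w) y =
      if (Sum.inr w : (Fin t' × Fin (δ - 1)) ⊕ Fin (a * t')) = y then 1 else 0 := by
    rintro (⟨i', r'⟩ | w') <;> simp [Emat, Matrix.one_apply]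
  simp only [hE, ite_mul, one_mul, zero_mul]
  rw [Finset.sum_ite_eq]
  simp only [Finset.mem_univ, if_true]
  rw [mul_C_apply]
  by_cases hP : c.1 ≠ i₀ ∧ c.2.isRight
  · obtain ⟨ℓ, hℓ⟩ := Sum.isRight_iff.mp hP.2
    simp [hP, hℓ, locf]
  · simp [hP]

lemma nb3 (r : Fin (δ - 1)) (c : Fin t' × (Fin a ⊕ Fin (δ - 1))) :
    Nmat β γ i₀ (.inl (i₀, r)) c =
      if c.1 ≠ i₀ ∧ c.2.isRight then 0 else locf β γ c ^ (r : ℕ) := by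
  rw [Nmat]
  erw [Matrix.mul_apply]
  rw [Fintype.sum_sum_type]
  have h2 : ∀ w', Emat (a := a) (δ := δ) (F := F) i₀ (Sum.inl (i₀, r)) (Sum.inr w') = 0 := by
    intro w'; simp [Emat, Matrix.one_apply]
  have h1 : ∀ p : Fin t' × Fin (δ - 1),
      Emat (a := a) (δ := δ) (F := F) i₀ (Sum.inl (i₀, r)) (Sum.inl p) =
      (if (i₀, r) = p then 1 else 0) + (if p.1 ≠ i₀ ∧ r = p.2 then 1 else 0) := by
    intro p; simp [Emat, Matrix.one_apply]
  simp only [h1, h2, add_mul, one_mul, zero_mul, ite_mul, Finset.sum_add_distrib,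
    Finset.sum_const_zero, add_zero]
  rw [Finset.sum_ite_eq]
  simp only [Finset.mem_univ, if_true]
  have h3 : ∀ p : Fin t' × Fin (δ - 1),
      (if p.1 ≠ i₀ ∧ r = p.2 then HCmat β γ i₀ (.inl p) c else 0)
        = if p = (c.1, r) then (if c.1 ≠ i₀ then locf β γ c ^ (r : ℕ) else 0) else 0 := by
    rintro ⟨i', r'⟩
    rw [mul_C_apply]
    by_cases hi' : i' = i₀ <;> by_cases hr' : r = r' <;> by_cases hic : i' = c.1 <;>
      simp_all [Prod.ext_iff] <;> try tauto
  rw [Finset.sum_congr rfl fun p _ => h3 p, Finset.sum_ite_eq']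
  simp only [Finset.mem_univ, if_true]
  rw [mul_C_apply]
  by_cases hP : c.1 ≠ i₀ ∧ c.2.isRight
  · obtain ⟨ℓ, hℓ⟩ := Sum.isRight_iff.mp hP.2
    have : ¬ (i₀ = c.1) := fun h => hP.1 h.symm
    simp [hP, hℓ, locf, this]
  · by_cases hc : c.1 = i₀
    · simp_all
    · have hL : ¬ (c.2.isRight = true) := fun h => hP ⟨hc, h⟩
      have hic : ¬ (i₀ = c.1) := fun h => hc h.symm
      simp [hL, hic, hc]


def Dmat (γ : Fin (δ - 1) → F) (i₀ : Fin t') :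
    Matrix ({i : Fin t' // i ≠ i₀} × Fin (δ - 1)) ({i : Fin t' // i ≠ i₀} × Fin (δ - 1)) F :=
  fun p q => if p.1.1 = q.1.1 then γ q.2 ^ (p.2 : ℕ) else 0

def Vmat (β : Fin t' → Fin a → F) (γ : Fin (δ - 1) → F) :
    Matrix (Fin (δ - 1) ⊕ Fin (a * t')) (Fin (δ - 1) ⊕ Fin (a * t')) F :=
  fun x y =>
    (Sum.elim γ (fun w => β ((eAW a t').symm w).1 ((eAW a t').symm w).2) y) ^
      (Sum.elim (fun r : Fin (δ - 1) => (r : ℕ)) (fun w : Fin (a * t') => δ - 1 + (w : ℕ)) x)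

lemma Nsub_eq :
    (Nmat β γ i₀).submatrix ⇑(ρe a δ i₀).symm ⇑(κe a δ i₀).symm =
      Matrix.fromBlocks (Dmat γ i₀)
        ((Nmat β γ i₀).submatrix (fun p => (ρe a δ i₀).symm (.inl p))
          (fun y => (κe a δ i₀).symm (.inr y)))
        0 (Vmat β γ) := by
  ext x y
  rcases x with ⟨p, r⟩ | (r | w) <;> rcases y with ⟨q, ℓ⟩ | (s | w')
  · simp only [Matrix.submatrix_apply, ρe_symm_inl, κe_symm_inl, Matrix.fromBlocks_apply₁₁]
    rw [nb1 β γ i₀ p.2 r]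
    simp [Dmat]
  · simp only [Matrix.submatrix_apply, Matrix.fromBlocks_apply₁₂]
  · simp only [Matrix.submatrix_apply, Matrix.fromBlocks_apply₁₂]
  · simp only [Matrix.submatrix_apply, ρe_symm_inr_inl, κe_symm_inl,
      Matrix.fromBlocks_apply₂₁, Matrix.zero_apply]
    rw [nb3]
    simp [q.2]
  · simp only [Matrix.submatrix_apply, ρe_symm_inr_inl, κe_symm_inr_inl,
      Matrix.fromBlocks_apply₂₂]
    rw [nb3]
    simp [Vmat]
  · simp only [Matrix.submatrix_apply, ρe_symm_inr_inl, κe_symm_inr_inr,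
      Matrix.fromBlocks_apply₂₂]
    rw [nb3]
    simp [Vmat]
  · simp only [Matrix.submatrix_apply, ρe_symm_inr_inr, κe_symm_inl,
      Matrix.fromBlocks_apply₂₁, Matrix.zero_apply]
    rw [nb2]
    simp [q.2]
  · simp only [Matrix.submatrix_apply, ρe_symm_inr_inr, κe_symm_inr_inl,
      Matrix.fromBlocks_apply₂₂]
    rw [nb2]
    simp [Vmat]
  · simp only [Matrix.submatrix_apply, ρe_symm_inr_inr, κe_symm_inr_inr,
      Matrix.fromBlocks_apply₂₂]
    rw [nb2]
    simp [Vmat]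

lemma det_Dmat : (Dmat (t' := t') γ i₀).det =
    (Matrix.of fun i j : Fin (δ - 1) => γ j ^ (i : ℕ)).det ^ (t' - 1) := by
  have hD : Dmat (t' := t') γ i₀ =
      (Matrix.blockDiagonal fun _ : {i : Fin t' // i ≠ i₀} =>
        (Matrix.of fun i j : Fin (δ - 1) => γ j ^ (i : ℕ))).submatrix
        ⇑(Equiv.prodComm _ _) ⇑(Equiv.prodComm _ _) := by
    ext ⟨p, r⟩ ⟨q, ℓ⟩
    simp [Dmat, Matrix.blockDiagonal_apply, Subtype.ext_iff]
  rw [hD, Matrix.det_submatrix_equiv_self, Matrix.det_blockDiagonal, Finset.prod_const,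
    Finset.card_univ]
  congr 1
  have : Fintype.card {i : Fin t' // i ≠ i₀} = t' - 1 := by
    simp [Fintype.card_subtype_compl, Fintype.card_subtype_eq]
  rw [this]

lemma det_Esub : ((Emat (a := a) (δ := δ) (F := F) i₀).submatrix
    ⇑(ρe a δ i₀).symm ⇑(ρe a δ i₀).symm).det = 1 := by
  have hE : (Emat (a := a) (δ := δ) (F := F) i₀).submatrix
      ⇑(ρe a δ i₀).symm ⇑(ρe a δ i₀).symm =
      Matrix.fromBlocks 1 0
        ((Emat i₀).submatrix (fun x => (ρe a δ i₀).symm (.inr x))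
          (fun q => (ρe a δ i₀).symm (.inl q))) 1 := by
    ext x y
    rcases x with ⟨p, r⟩ | (r | w) <;> rcases y with ⟨q, ℓ⟩ | (s | w')
    · simp [Emat, Matrix.one_apply, Prod.ext_iff, Subtype.ext_iff, p.2]
    · simp [Emat, Matrix.one_apply, p.2]
    · simp [Emat, Matrix.one_apply, p.2]
    · simp only [Matrix.submatrix_apply, Matrix.fromBlocks_apply₂₁]
    · simp [Emat, Matrix.one_apply, Prod.ext_iff]
    · simp [Emat, Matrix.one_apply]
    · simp only [Matrix.submatrix_apply, Matrix.fromBlocks_apply₂₁]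
    · simp [Emat, Matrix.one_apply]
    · simp [Emat, Matrix.one_apply]
  rw [hE, Matrix.det_fromBlocks_zero₁₂, Matrix.det_one, Matrix.det_one, mul_one]

lemma det_Csub : ((Cmat (a := a) (δ := δ) (F := F) i₀).submatrix
    ⇑(κe a δ i₀).symm ⇑(κe a δ i₀).symm).det = 1 := by
  have hC : (Cmat (a := a) (δ := δ) (F := F) i₀).submatrix
      ⇑(κe a δ i₀).symm ⇑(κe a δ i₀).symm =
      Matrix.fromBlocks 1 0
        ((Cmat i₀).submatrix (fun x => (κe a δ i₀).symm (.inr x))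
          (fun q => (κe a δ i₀).symm (.inl q))) 1 := by
    ext x y
    rcases x with ⟨p, ℓ⟩ | (s | w) <;> rcases y with ⟨q, ℓ'⟩ | (s' | w')
    · simp [Cmat, Matrix.one_apply, Prod.ext_iff, Subtype.ext_iff, p.2]
    · simp [Cmat, Matrix.one_apply, Prod.ext_iff, p.2]
    · simp [Cmat, Matrix.one_apply, Prod.ext_iff, p.2]
    · simp only [Matrix.submatrix_apply, Matrix.fromBlocks_apply₂₁]
    · simp [Cmat, Matrix.one_apply, Prod.ext_iff]
    · simp [Cmat, Matrix.one_apply, Prod.ext_iff]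
    · simp only [Matrix.submatrix_apply, Matrix.fromBlocks_apply₂₁]
    · simp [Cmat, Matrix.one_apply, Prod.ext_iff]
    · have hiff : (((eAW a t').symm w).1 = ((eAW a t').symm w').1 ∧
          ((eAW a t').symm w).2 = ((eAW a t').symm w').2) ↔ w = w' := by
        rw [← Prod.ext_iff, (eAW a t').symm.injective.eq_iff]
      simp [Cmat, Matrix.one_apply, Prod.ext_iff, hiff]
  rw [hC, Matrix.det_fromBlocks_zero₁₂, Matrix.det_one, Matrix.det_one, mul_one]

lemma det_Hsub : ((Hmat β γ).submatrix ⇑(ρe a δ i₀).symm ⇑(κe a δ i₀).symm).det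
    = (Dmat γ i₀).det * (Vmat β γ).det := by
  have h1 : (Hmat β γ).submatrix ⇑(ρe a δ i₀).symm ⇑(κe a δ i₀).symm *
      (Cmat i₀).submatrix ⇑(κe a δ i₀).symm ⇑(κe a δ i₀).symm =
      (HCmat β γ i₀).submatrix ⇑(ρe a δ i₀).symm ⇑(κe a δ i₀).symm :=
    Matrix.submatrix_mul_equiv (Hmat β γ) (Cmat i₀) _ (κe a δ i₀).symm _
  have h2 : (Emat i₀).submatrix ⇑(ρe a δ i₀).symm ⇑(ρe a δ i₀).symm *
      (HCmat β γ i₀).submatrix ⇑(ρe a δ i₀).symm ⇑(κe a δ i₀).symm =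
      (Nmat β γ i₀).submatrix ⇑(ρe a δ i₀).symm ⇑(κe a δ i₀).symm :=
    Matrix.submatrix_mul_equiv (Emat i₀) (HCmat β γ i₀) _ (ρe a δ i₀).symm _
  have h3 := congrArg Matrix.det (h2.symm.trans (congrArg _ h1.symm))
  rw [Nsub_eq, Matrix.det_fromBlocks_zero₂₁] at h3
  rw [Matrix.det_mul, Matrix.det_mul, det_Esub, det_Csub, one_mul, mul_one] at h3
  exact h3.symm

end Main
end Stmt13Aux

/-- The written-symbols matrix `H^F|_W` of Section VI: block-diagonal Vandermonde blocks
`P_i = V_{δ-1}(β_{i,1},…,β_{i,a},γ_1,…,γ_{δ-1})` together with the bottom block row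
`(Q_1|…|Q_{t'})` of rows `δ-1,…,at'+δ-2` of the Vandermonde matrices on the same locators.
This square matrix of size `t'(a+δ-1)` is invertible; in fact up to sign its determinant is
`(det V_{δ-1}(γ))^{t'-1} · det V_{at'+δ-1}(β_{1,1},…,β_{t',a},γ_1,…,γ_{δ-1})`,
and both factors are nonzero. -/
theorem stmt13 {F : Type*} [Field F] [DecidableEq F]
    (a t' δ : ℕ) (ha : 1 ≤ a) (ht : 1 ≤ t') (hδ : 2 ≤ δ)
    (β : Fin t' → Fin a → F) (γ : Fin (δ - 1) → F)
    (hdist : Function.Injective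
      (Sum.elim (fun p : Fin t' × Fin a => β p.1 p.2) γ)) :
    let loc : Fin t' × (Fin a ⊕ Fin (δ - 1)) → F := fun c =>
      Sum.elim (fun j => β c.1 j) γ c.2
    let M : Matrix ((Fin t' × Fin (δ - 1)) ⊕ Fin (a * t'))
        (Fin t' × (Fin a ⊕ Fin (δ - 1))) F := fun ri ci =>
      Sum.elim
        (fun p => if p.1 = ci.1 then loc ci ^ (p.2 : ℕ) else 0)
        (fun w => loc ci ^ (δ - 1 + (w : ℕ)))
        ri
    let Vγ : Matrix (Fin (δ - 1)) (Fin (δ - 1)) F := fun i j => γ j ^ (i : ℕ)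
    let bigcols : (Fin t' × Fin a) ⊕ Fin (δ - 1) ≃ Fin (t' * a + (δ - 1)) :=
      (Equiv.sumCongr finProdFinEquiv (Equiv.refl _)).trans finSumFinEquiv
    let bigV : Matrix (Fin (t' * a + (δ - 1))) (Fin (t' * a + (δ - 1))) F :=
      fun i j =>
        Sum.elim (fun p : Fin t' × Fin a => β p.1 p.2) γ (bigcols.symm j) ^ (i : ℕ)
    Function.Bijective M.mulVecLin ∧
    Vγ.det ≠ 0 ∧ bigV.det ≠ 0 ∧
    ∀ e : ((Fin t' × Fin (δ - 1)) ⊕ Fin (a * t')) ≃ (Fin t' × (Fin a ⊕ Fin (δ - 1))),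
      ∃ ε : F, (ε = 1 ∨ ε = -1) ∧
        (M.submatrix id e).det = ε * Vγ.det ^ (t' - 1) * bigV.det := by
  intro loc M Vγ bigcols bigV
  classical
  have i₀ : Fin t' := ⟨0, ht⟩
  have hM : M = Stmt13Aux.Hmat β γ := rfl
  have hγinj : Function.Injective γ := fun ℓ ℓ' h => Sum.inr_injective (hdist h)
  have hVγ : Vγ.det ≠ 0 := Stmt13Aux.det_pow_ne_zero hγinj
  have hbig : bigV.det ≠ 0 :=
    Stmt13Aux.det_pow_ne_zero
      (v := fun j => Sum.elim (fun p : Fin t' × Fin a => β p.1 p.2) γ (bigcols.symm j))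
      (hdist.comp bigcols.symm.injective)
  have hadd : (δ - 1) + a * t' = t' * a + (δ - 1) := by
    rw [Nat.add_comm (δ - 1) (a * t'), Nat.mul_comm a t']
  set eR : Fin (δ - 1) ⊕ Fin (a * t') ≃ Fin (t' * a + (δ - 1)) :=
    finSumFinEquiv.trans (finCongr hadd) with heR
  set g : (Fin (δ - 1) ⊕ Fin (a * t')) ≃ ((Fin t' × Fin a) ⊕ Fin (δ - 1)) :=
    (Equiv.sumCongr (Equiv.refl (Fin (δ - 1))) (Stmt13Aux.eAW a t').symm).trans
      (Equiv.sumComm _ _) with hg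
  have hbigVapp : ∀ i j, bigV i j =
      Sum.elim (fun p : Fin t' × Fin a => β p.1 p.2) γ (bigcols.symm j) ^ (i : ℕ) :=
    fun i j => rfl
  have hVmat : Stmt13Aux.Vmat β γ = bigV.submatrix ⇑eR ⇑(g.trans bigcols) := by
    ext x y
    rw [Matrix.submatrix_apply, hbigVapp, Equiv.trans_apply, Equiv.symm_apply_apply]
    rcases x with r | w <;> rcases y with ℓ | w' <;>
      simp [Stmt13Aux.Vmat, heR, hg, finCongr_apply]
  have hVγof : (Matrix.of fun i j : Fin (δ - 1) => γ j ^ (i : ℕ)) = Vγ := rfl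
  have main : ∀ e : ((Fin t' × Fin (δ - 1)) ⊕ Fin (a * t')) ≃
      (Fin t' × (Fin a ⊕ Fin (δ - 1))),
      ∃ ε : F, (ε = 1 ∨ ε = -1) ∧
        (M.submatrix id ⇑e).det = ε * Vγ.det ^ (t' - 1) * bigV.det := by
    intro e
    have hsub : M.submatrix id ⇑e =
        ((Stmt13Aux.Hmat β γ).submatrix ⇑(Stmt13Aux.ρe a δ i₀).symm
          ⇑(Stmt13Aux.κe a δ i₀).symm).submatrix
          ⇑(Stmt13Aux.ρe a δ i₀) ⇑(e.trans (Stmt13Aux.κe a δ i₀)) := by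
      ext x y
      simp [hM, Matrix.submatrix_apply]
    obtain ⟨ε₁, hε₁, h1⟩ := Stmt13Aux.det_submatrix_sign
      ((Stmt13Aux.Hmat β γ).submatrix ⇑(Stmt13Aux.ρe a δ i₀).symm
        ⇑(Stmt13Aux.κe a δ i₀).symm) (Stmt13Aux.ρe a δ i₀)
      (e.trans (Stmt13Aux.κe a δ i₀))
    obtain ⟨ε₂, hε₂, h2⟩ := Stmt13Aux.det_submatrix_sign bigV eR (g.trans bigcols)
    refine ⟨ε₁ * ε₂, ?_, ?_⟩
    · rcases hε₁ with h | h <;> rcases hε₂ with h' | h' <;> rw [h, h'] <;> norm_num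
    · rw [hsub, h1, Stmt13Aux.det_Hsub, Stmt13Aux.det_Dmat, hVγof, hVmat, h2]
      ring
  refine ⟨?_, hVγ, hbig, main⟩
  set e₀ := (Stmt13Aux.ρe a δ i₀).trans (Stmt13Aux.κe a δ i₀).symm with he₀
  obtain ⟨ε, hε, hdet⟩ := main e₀
  have hε0 : ε ≠ 0 := by rcases hε with h | h <;> rw [h] <;> norm_num
  have hdet0 : (M.submatrix id ⇑e₀).det ≠ 0 := by
    rw [hdet]
    exact mul_ne_zero (mul_ne_zero hε0 (pow_ne_zero _ hVγ)) hbig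
  set M₀ := M.submatrix id ⇑e₀ with hM₀
  have h1 : M₀ * M₀⁻¹ = 1 := Matrix.mul_nonsing_inv _ (isUnit_iff_ne_zero.mpr hdet0)
  have h2 : M₀⁻¹ * M₀ = 1 := Matrix.nonsing_inv_mul _ (isUnit_iff_ne_zero.mpr hdet0)
  have hbij₀ : Function.Bijective ⇑M₀.mulVecLin := by
    constructor
    · intro v w hvw
      have hv : (M₀⁻¹ * M₀).mulVecLin v = (M₀⁻¹ * M₀).mulVecLin w := by
        rw [Matrix.mulVecLin_mul]
        simpa using congrArg ⇑M₀⁻¹.mulVecLin hvw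
      simpa [h2, Matrix.mulVecLin_one] using hv
    · intro u
      refine ⟨M₀⁻¹.mulVecLin u, ?_⟩
      have hu : (M₀ * M₀⁻¹).mulVecLin u = u := by rw [h1, Matrix.mulVecLin_one]; rfl
      rw [Matrix.mulVecLin_mul] at hu
      exact hu
  have hfun : ⇑M.mulVecLin =
      ⇑M₀.mulVecLin ∘ (fun (v : Fin t' × (Fin a ⊕ Fin (δ - 1)) → F)
        (j : (Fin t' × Fin (δ - 1)) ⊕ Fin (a * t')) => v (e₀ j)) := by
    funext v
    funext x
    simp only [Matrix.mulVecLin_apply, Matrix.mulVec, dotProduct,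
      Function.comp_apply, hM₀, Matrix.submatrix_apply, id_eq]
    exact (Fintype.sum_equiv e₀ _ _ fun j => rfl).symm
  have hpre : Function.Bijective (fun (v : Fin t' × (Fin a ⊕ Fin (δ - 1)) → F)
      (j : (Fin t' × Fin (δ - 1)) ⊕ Fin (a * t')) => v (e₀ j)) := by
    constructor
    · intro v w h
      funext c
      have := congrFun h (e₀.symm c)
      simpa using this
    · intro w
      exact ⟨fun c => w (e₀.symm c), by funext j; simp⟩
  rw [hfun]
  exact hbij₀.comp hpre
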